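/- Let x ∈ [1/4, 1] be a real number and define the Heron sequence H : ℕ → ℝ by H 0 = 1 and H (n+1) = (H n + x / H n)/2. Then for every natural number n, one has 0 ≤ H n - √x ≤ 2^{-2^n}. -/

import Mathlib

theorem heron_fast_conv (x : ℝ) (hx : x ∈ Set.Icc (1 / 4 : ℝ) 1) (H : ℕ → ℝ)
    (hH0 : H 0 = 1) (hHs : ∀ n, H (n + 1) = (H n + x / H n) / 2) :
    ∀ n : ℕ, 0 ≤ H n - Real.sqrt x ∧ H n - Real.sqrt x ≤ 1 / 2 ^ (2 ^ n) := by
  obtain ⟨hx1, hx2⟩ := hx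
  have hx0 : (0:ℝ) ≤ x := by linarith
  have hs2 : (1:ℝ)/2 ≤ Real.sqrt x := by
    have h := Real.sqrt_le_sqrt hx1
    rwa [show (1:ℝ)/4 = (1/2)^2 by norm_num, Real.sqrt_sq (by norm_num : (0:ℝ) ≤ 1/2)] at h
  have hs1 : Real.sqrt x ≤ 1 := by
    have h := Real.sqrt_le_sqrt hx2
    simpa using h
  have hsx : Real.sqrt x ^ 2 = x := Real.sq_sqrt hx0
  intro n
  induction n with
  | zero =>
    rw [hH0]
    constructor
    · linarith
    · norm_num; linarith
  | succ n ih =>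
    obtain ⟨ih1, ih2⟩ := ih
    have hHpos : (0:ℝ) < H n := by linarith
    have key : H (n+1) - Real.sqrt x = (H n - Real.sqrt x)^2 / (2 * H n) := by
      rw [hHs, ← hsx]
      field_simp
      have ht : Real.sqrt (Real.sqrt x ^ 2) = Real.sqrt x := Real.sqrt_sq (Real.sqrt_nonneg x)
      linear_combination - (Real.sqrt (Real.sqrt x ^ 2) + Real.sqrt x) * ht
    have hb : (1:ℝ)/2^(2^(n+1)) = (1/2^(2^n))^2 := by
      rw [pow_succ, pow_mul]
      ring
    constructor
    · rw [key]; positivity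
    · rw [key, hb]
      have h1 : (H n - Real.sqrt x)^2 / (2 * H n) ≤ (H n - Real.sqrt x)^2 := by
        apply div_le_self (by positivity)
        linarith
      have h2 : (H n - Real.sqrt x)^2 ≤ (1/2^(2^n))^2 := by
        apply pow_le_pow_left₀ (by linarith) ih2
      linarith
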